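/- For all integers n ≥ 0, StakRwd ≥ 2, 0 < p ≤ 1 with q = 1 - p, we have ∑_{k=0}^{n} (1/(log₂(k+1) + log₂ StakRwd)) · C(n,k) p^k q^{n-k} ≤ (1/p) · (1 - q^{n+1})/(log₂(n+1) + log₂ StakRwd). -/

import Mathlib

open Finset

theorem stmt_4 (n : ℕ) (StakRwd p : ℝ) (hS : 2 ≤ StakRwd) (hp : 0 < p) (hp1 : p ≤ 1) :
    ∑ k ∈ range (n + 1),
        (1 / (Real.logb 2 ((k : ℝ) + 1) + Real.logb 2 StakRwd)) * (n.choose k : ℝ) *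
          p ^ k * (1 - p) ^ (n - k)
      ≤ (1 / p) * (1 - (1 - p) ^ (n + 1)) /
          (Real.logb 2 ((n : ℝ) + 1) + Real.logb 2 StakRwd) := by
  have h2 : (1:ℝ) < 2 := one_lt_two
  set L := Real.logb 2 StakRwd with hLdef
  have hL : 1 ≤ L := by
    have := Real.logb_le_logb_of_le (b := 2) h2 (by norm_num) hS
    rwa [Real.logb_self_eq_one h2] at this
  have hq0 : (0:ℝ) ≤ 1 - p := by linarith
  have hbn : (0:ℝ) ≤ Real.logb 2 ((n:ℝ)+1) :=
    Real.logb_nonneg h2 (by push_cast; linarith [Nat.cast_nonneg (α := ℝ) n])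
  have hD : 0 < Real.logb 2 ((n:ℝ)+1) + L := by linarith
  have hl2 : 0 < Real.log 2 := Real.log_pos h2
  -- key per-index inequality
  have key : ∀ k ∈ range (n+1),
      (1 / (Real.logb 2 ((k : ℝ) + 1) + L)) * (n.choose k : ℝ) * p ^ k * (1-p) ^ (n - k)
      ≤ ((n+1).choose (k+1) : ℝ) * p ^ k * (1-p) ^ (n - k) /
          (Real.logb 2 ((n : ℝ)+1) + L) := by
    intro k hk
    rw [mem_range, Nat.lt_succ_iff] at hk
    have hak : (0:ℝ) ≤ Real.logb 2 ((k:ℝ)+1) :=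
      Real.logb_nonneg h2 (by push_cast; linarith [Nat.cast_nonneg (α := ℝ) k])
    have hDk : 0 < Real.logb 2 ((k:ℝ)+1) + L := by linarith
    have hknR : (k:ℝ) ≤ (n:ℝ) := by exact_mod_cast hk
    have hmain : ((k:ℝ)+1) * (Real.logb 2 ((n:ℝ)+1) + L)
        ≤ ((n:ℝ)+1) * (Real.logb 2 ((k:ℝ)+1) + L) := by
      rcases Nat.eq_zero_or_pos k with hk0 | hk1
      · subst hk0
        have hb : Real.logb 2 ((n:ℝ)+1) ≤ (n:ℝ) := by
          have h1 : ((n:ℝ)+1) ≤ (2:ℝ) ^ (n:ℕ) := by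
            exact_mod_cast (Nat.lt_two_pow_self (n := n))
          calc Real.logb 2 ((n:ℝ)+1) ≤ Real.logb 2 ((2:ℝ)^(n:ℕ)) :=
                Real.logb_le_logb_of_le h2 (by positivity) h1
            _ = (n:ℝ) := by
                rw [← Real.rpow_natCast 2 n, Real.logb_rpow (by norm_num) (by norm_num)]
        have h0 : Real.logb 2 ((0:ℝ)+1) = 0 := by norm_num
        push_cast
        rw [h0]
        nlinarith [Nat.cast_nonneg (α := ℝ) n]
      · -- k ≥ 1 : use log(n+1) - log(k+1) ≤ (n-k)/(k+1) and log(k+1) ≥ log 2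
        have hk1R : (1:ℝ) ≤ (k:ℝ) := by exact_mod_cast hk1
        set A := Real.log ((k:ℝ)+1) with hA
        set B := Real.log ((n:ℝ)+1) with hB
        have hA2 : Real.log 2 ≤ A := by
          apply Real.log_le_log (by norm_num)
          linarith
        have hdiff : ((k:ℝ)+1) * (B - A) ≤ (n:ℝ) - k := by
          have ht : (0:ℝ) < ((n:ℝ)+1)/((k:ℝ)+1) := by positivity
          have := Real.log_le_sub_one_of_pos ht
          rw [Real.log_div (by linarith) (by linarith)] at this
          have hk1' : (0:ℝ) < (k:ℝ)+1 := by linarith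
          rw [div_sub_one (ne_of_gt hk1')] at this
          calc ((k:ℝ)+1) * (B - A) ≤ ((k:ℝ)+1) * ((((n:ℝ)+1) - ((k:ℝ)+1))/((k:ℝ)+1)) := by
                apply mul_le_mul_of_nonneg_left this (le_of_lt hk1')
            _ = (n:ℝ) - k := by field_simp; ring
        -- rewrite logb as log / log 2
        have hexp : ∀ x : ℝ, Real.logb 2 x = Real.log x / Real.log 2 := fun x => rfl
        rw [hexp, hexp, ← hA, ← hB]
        rw [div_add' _ _ _ (ne_of_gt hl2), div_add' _ _ _ (ne_of_gt hl2),
          ← mul_div_assoc, ← mul_div_assoc]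
        apply (div_le_div_iff_of_pos_right hl2).mpr
        have hlog2 : (0.6931471803:ℝ) < Real.log 2 := Real.log_two_gt_d9
        nlinarith [mul_nonneg (sub_nonneg.mpr hknR) (sub_nonneg.mpr hA2),
          mul_nonneg (sub_nonneg.mpr hknR) (mul_nonneg (by linarith : (0:ℝ) ≤ L - 1) hl2.le),
          mul_nonneg (sub_nonneg.mpr hknR) (by nlinarith : (0:ℝ) ≤ 2 * Real.log 2 - 1)]
    -- convert hmain into the term inequality
    have hfrac : 1 / (Real.logb 2 ((k:ℝ)+1) + L)
        ≤ ((n:ℝ)+1) / (((k:ℝ)+1) * (Real.logb 2 ((n:ℝ)+1) + L)) := by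
      rw [div_le_div_iff₀ hDk (by positivity)]
      nlinarith [hmain]
    have hchoose : ((n:ℝ)+1) * (n.choose k : ℝ) = ((k:ℝ)+1) * ((n+1).choose (k+1) : ℝ) := by
      have := Nat.add_one_mul_choose_eq n k
      have h' : (((n:ℕ)+1) * n.choose k : ℝ) = (((n:ℕ)+1).choose (k+1) * ((k:ℕ)+1) : ℝ) := by
        exact_mod_cast congrArg (Nat.cast (R := ℝ)) this
      push_cast at h'
      linarith
    have hnn : (0:ℝ) ≤ (n.choose k : ℝ) * p ^ k * (1-p) ^ (n-k) := by positivity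
    calc (1 / (Real.logb 2 ((k : ℝ) + 1) + L)) * (n.choose k : ℝ) * p ^ k * (1-p) ^ (n - k)
        = (1 / (Real.logb 2 ((k : ℝ) + 1) + L)) * ((n.choose k : ℝ) * p ^ k * (1-p) ^ (n - k)) := by
          ring
      _ ≤ (((n:ℝ)+1) / (((k:ℝ)+1) * (Real.logb 2 ((n:ℝ)+1) + L))) *
            ((n.choose k : ℝ) * p ^ k * (1-p) ^ (n - k)) :=
          mul_le_mul_of_nonneg_right hfrac hnn
      _ = ((n+1).choose (k+1) : ℝ) * p ^ k * (1-p) ^ (n - k) /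
            (Real.logb 2 ((n : ℝ)+1) + L) := by
          have hk1' : ((k:ℝ)+1) ≠ 0 := by positivity
          rw [div_mul_eq_mul_div, div_eq_div_iff (mul_ne_zero hk1' hD.ne') hD.ne']
          linear_combination (p ^ k * (1 - p) ^ (n - k) * (Real.logb 2 ((n:ℝ)+1) + L)) * hchoose
  -- sum identity
  have hsum : ∑ k ∈ range (n+1), ((n+1).choose (k+1) : ℝ) * p ^ k * (1-p) ^ (n-k)
      = (1 - (1-p)^(n+1)) / p := by
    have hone : (1:ℝ) = ∑ j ∈ range (n+2), p ^ j * (1-p) ^ ((n+1) - j) * ((n+1).choose j : ℝ) := by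
      have h := add_pow p (1-p) (n+1)
      simp only [add_sub_cancel, one_pow] at h
      exact h
    rw [Finset.sum_range_succ' (fun j => p ^ j * (1-p) ^ ((n+1) - j) * ((n+1).choose j : ℝ)) (n+1)]
      at hone
    simp only [pow_zero, Nat.choose_zero_right, Nat.cast_one, one_mul, mul_one,
      Nat.sub_zero] at hone
    have hstep : ∑ k ∈ range (n+1), p ^ (k+1) * (1-p) ^ ((n+1) - (k+1)) * ((n+1).choose (k+1) : ℝ)
        = p * ∑ k ∈ range (n+1), ((n+1).choose (k+1) : ℝ) * p ^ k * (1-p) ^ (n-k) := by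
      rw [Finset.mul_sum]
      apply Finset.sum_congr rfl
      intro k hk
      have : (n+1) - (k+1) = n - k := by omega
      rw [this]
      ring
    rw [hstep] at hone
    field_simp
    linear_combination -hone
  calc ∑ k ∈ range (n + 1),
        (1 / (Real.logb 2 ((k : ℝ) + 1) + L)) * (n.choose k : ℝ) * p ^ k * (1 - p) ^ (n - k)
      ≤ ∑ k ∈ range (n + 1),
          ((n+1).choose (k+1) : ℝ) * p ^ k * (1-p) ^ (n - k) / (Real.logb 2 ((n : ℝ)+1) + L) :=
        Finset.sum_le_sum key
    _ = (∑ k ∈ range (n + 1), ((n+1).choose (k+1) : ℝ) * p ^ k * (1-p) ^ (n - k)) /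
          (Real.logb 2 ((n : ℝ)+1) + L) := by rw [Finset.sum_div]
    _ = (1 / p) * (1 - (1 - p) ^ (n + 1)) / (Real.logb 2 ((n : ℝ) + 1) + L) := by
        rw [hsum]; ring
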